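/- arXiv:1512.07574 — 3 statements merged into one kernel-verified Lean document; each statement's English description precedes it below -/
import Mathlib

section
/- In G̅_q, no two vertices of degree q are adjacent; consequently every edge joins either a degree-q vertex to a degree-(q+1) vertex or two degree-(q+1) vertices. -/
open Projectivization

/-- Orthogonality of projective points: scalar product of representatives is zero. -/
def ortho {F : Type} [Field F] (P L : Projectivization F (Fin 3 → F)) : Prop :=
  dotProduct P.rep L.rep = 0

instance {F : Type} [Field F] [Finite F] :
    Finite (Projectivization F (Fin 3 → F)) := Quotient.finite _

noncomputable instance {F : Type} [Field F] [Fintype F] :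
    Fintype (Projectivization F (Fin 3 → F)) := Fintype.ofFinite _

/-- The incidence graph `G_q` of the projective plane over `F`. -/
def projGraph (F : Type) [Field F] :
    SimpleGraph (Bool × Projectivization F (Fin 3 → F)) where
  Adj v w := v.1 ≠ w.1 ∧ ortho v.2 w.2
  symm := by
    constructor
    rintro ⟨s, P⟩ ⟨t, L⟩ ⟨h1, h2⟩
    exact ⟨h1.symm, by rwa [ortho, dotProduct_comm]⟩
  loopless := by constructor; rintro ⟨s, P⟩ ⟨h, _⟩; exact h rfl

/-- The modified incidence (polarity) graph `G̅_q` of the projective plane over `F`. -/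
def polarityGraph (F : Type) [Field F] :
    SimpleGraph (Projectivization F (Fin 3 → F)) where
  Adj P L := P ≠ L ∧ ortho P L
  symm := by
    constructor
    rintro P L ⟨h1, h2⟩
    exact ⟨h1.symm, by rwa [ortho, dotProduct_comm]⟩
  loopless := by constructor; rintro P ⟨h, _⟩; exact h rfl

section Aux

open Matrix

variable {F : Type} [Field F]

/-- Triple cross product vanishing under orthogonality hypotheses. -/
lemma aux_cross_self (v w : Fin 3 → F) (hv : v ⬝ᵥ v = 0) (hvw : v ⬝ᵥ w = 0) :
    crossProduct v (crossProduct v w) = 0 := by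
  simp only [dotProduct, Fin.sum_univ_three] at hv hvw
  have h0 : (crossProduct v (crossProduct v w)) 0 = 0 := by
    simp [cross_apply]
    linear_combination v 0 * hvw - w 0 * hv
  have h1 : (crossProduct v (crossProduct v w)) 1 = 0 := by
    simp [cross_apply]
    linear_combination v 1 * hvw - w 1 * hv
  have h2 : (crossProduct v (crossProduct v w)) 2 = 0 := by
    simp [cross_apply]
    linear_combination v 2 * hvw - w 2 * hv
  funext i
  fin_cases i
  · exact h0
  · exact h1
  · exact h2

/-- No two distinct self-orthogonal points are orthogonal to each other. -/
lemma no_two_self_ortho (P L : Projectivization F (Fin 3 → F)) (hne : P ≠ L)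
    (hPL : P.rep ⬝ᵥ L.rep = 0) (hPP : P.rep ⬝ᵥ P.rep = 0) (hLL : L.rep ⬝ᵥ L.rep = 0) :
    False := by
  have hv : P.rep ≠ 0 := P.rep_nonzero
  have hw : L.rep ≠ 0 := L.rep_nonzero
  have hc : crossProduct P.rep L.rep ≠ 0 := by
    intro h
    exact hne <| by
      rw [← P.mk_rep, ← L.mk_rep]
      exact (Projectivization.mk_eq_mk_iff_crossProduct_eq_zero hv hw).mpr h
  have h1 : crossProduct P.rep (crossProduct P.rep L.rep) = 0 := aux_cross_self _ _ hPP hPL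
  have h2 : crossProduct L.rep (crossProduct P.rep L.rep) = 0 := by
    have h3 : crossProduct L.rep (crossProduct L.rep P.rep) = 0 :=
      aux_cross_self _ _ hLL (by rwa [dotProduct_comm])
    have h4 : crossProduct P.rep L.rep = -(crossProduct L.rep P.rep) :=
      (cross_anticomm L.rep P.rep).symm
    rw [h4, map_neg, h3, neg_zero]
  have e1 : Projectivization.mk F P.rep hv = Projectivization.mk F (crossProduct P.rep L.rep) hc :=
    (Projectivization.mk_eq_mk_iff_crossProduct_eq_zero hv hc).mpr h1
  have e2 : Projectivization.mk F L.rep hw = Projectivization.mk F (crossProduct P.rep L.rep) hc :=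
    (Projectivization.mk_eq_mk_iff_crossProduct_eq_zero hw hc).mpr h2
  exact hne (by rw [← P.mk_rep, ← L.mk_rep]; exact e1.trans e2.symm)

variable [Fintype F]

/-- The number of projective points orthogonal to a fixed nonzero vector is `q + 1`. -/
lemma card_perp (p : Fin 3 → F) (hp : p ≠ 0) :
    Nat.card {L : Projectivization F (Fin 3 → F) | p ⬝ᵥ L.rep = 0} = Fintype.card F + 1 := by
  classical
  set q := Fintype.card F with hq
  have hq2 : 2 ≤ q := Fintype.one_lt_card
  set f : (Fin 3 → F) →ₗ[F] F :=
    { toFun := fun v => p ⬝ᵥ v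
      map_add' := fun x y => dotProduct_add p x y
      map_smul' := fun c x => dotProduct_smul c p x } with hfdef
  have hfapp : ∀ v, f v = p ⬝ᵥ v := fun _ => rfl
  obtain ⟨i, hi⟩ := Function.ne_iff.mp hp
  have hi' : p i ≠ (0 : F) := hi
  have hfsurj : Function.Surjective f := by
    intro c
    refine ⟨Pi.single i (c * (p i)⁻¹), ?_⟩
    rw [hfapp, dotProduct_single]
    field_simp
  have hker : Module.finrank F (LinearMap.ker f) = 2 := by
    have h := LinearMap.finrank_range_add_finrank_ker f
    rw [LinearMap.range_eq_top.mpr hfsurj, finrank_top, Module.finrank_self,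
      Module.finrank_pi, Fintype.card_fin] at h
    omega
  haveI : Fintype (LinearMap.ker f) := Fintype.ofFinite _
  have hcardW : Nat.card (LinearMap.ker f) = q ^ 2 := by
    rw [Nat.card_eq_fintype_card, Module.card_eq_pow_finrank (K := F), hker]
  set T := {v : Fin 3 → F // v ≠ 0 ∧ p ⬝ᵥ v = 0} with hT
  have e1 : T ≃ {w : LinearMap.ker f // w ≠ 0} :=
    { toFun := fun v => ⟨⟨v.1, LinearMap.mem_ker.mpr v.2.2⟩,
        fun h => v.2.1 (congrArg Subtype.val h)⟩
      invFun := fun w => ⟨w.1.1, ⟨fun h => w.2 (Subtype.ext h),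
        LinearMap.mem_ker.mp w.1.2⟩⟩
      left_inv := fun v => rfl
      right_inv := fun w => rfl }
  have hsplit : Nat.card (LinearMap.ker f) =
      Nat.card {w : LinearMap.ker f // w = 0} + Nat.card {w : LinearMap.ker f // ¬ w = 0} := by
    rw [← Nat.card_sum, Nat.card_congr (Equiv.sumCompl _)]
  have hcardT : Nat.card T = q ^ 2 - 1 := by
    rw [Nat.card_congr e1]
    show Nat.card {w : LinearMap.ker f // ¬ w = 0} = q ^ 2 - 1
    have h1 : Nat.card {w : LinearMap.ker f // w = 0} = 1 := by
      rw [Nat.card_eq_one_iff_unique]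
      exact ⟨⟨fun x y => Subtype.ext (x.2.trans y.2.symm)⟩, ⟨⟨0, rfl⟩⟩⟩
    omega
  set S := {L : Projectivization F (Fin 3 → F) | p ⬝ᵥ L.rep = 0} with hS
  have hmem : ∀ v : T, Projectivization.mk F v.1 v.2.1 ∈ S := by
    intro v
    obtain ⟨a, ha⟩ := Projectivization.exists_smul_eq_mk_rep F v.1 v.2.1
    simp only [hS, Set.mem_setOf_eq, ← ha, Units.smul_def, dotProduct_smul, v.2.2,
      smul_eq_mul, mul_zero]
  set π : T → S := fun v => ⟨Projectivization.mk F v.1 v.2.1, hmem v⟩ with hπ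
  have efib : ∀ L : S, {t : T // π t = L} ≃ Fˣ := by
    intro L
    have hr : (L : Projectivization F (Fin 3 → F)).rep ≠ 0 := Projectivization.rep_nonzero _
    have hrS : p ⬝ᵥ (L : Projectivization F (Fin 3 → F)).rep = 0 := L.2
    set r := (L : Projectivization F (Fin 3 → F)).rep with hrdef
    have key : ∀ (a : Fˣ) (h : (a : F) • r ≠ 0),
        Projectivization.mk F ((a : F) • r) h = (L : Projectivization F (Fin 3 → F)) := by
      intro a h
      exact ((Projectivization.mk_eq_mk_iff' F _ r h hr).mpr ⟨a, rfl⟩).trans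
        (Projectivization.mk_rep _)
    set g : Fˣ → {t : T // π t = L} := fun a =>
      ⟨⟨(a : F) • r, smul_ne_zero (Units.ne_zero a) hr,
          by rw [dotProduct_smul, hrS, smul_eq_mul, mul_zero]⟩,
        Subtype.ext (key a _)⟩ with hg
    have hginj : Function.Injective g := by
      intro a b hab
      have h : (a : F) • r = (b : F) • r := by
        have := congrArg (fun t => (t : {t : T // π t = L}).1.1) hab
        simpa [hg] using this
      have h2 : ((a : F) - (b : F)) • r = 0 := by rw [sub_smul, h, sub_self]
      rcases smul_eq_zero.mp h2 with h3 | h3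
      · exact Units.ext (sub_eq_zero.mp h3)
      · exact absurd h3 hr
    have hgsurj : Function.Surjective g := by
      rintro ⟨t, ht⟩
      have hval : Projectivization.mk F t.1 t.2.1 = (L : Projectivization F (Fin 3 → F)) :=
        congrArg Subtype.val ht
      rw [← Projectivization.mk_rep (L : Projectivization F (Fin 3 → F))] at hval
      obtain ⟨a, ha⟩ := (Projectivization.mk_eq_mk_iff F _ _ t.2.1
        (Projectivization.rep_nonzero _)).mp hval
      refine ⟨a, ?_⟩
      apply Subtype.ext
      apply Subtype.ext
      show (a : F) • r = t.1
      rw [← Units.smul_def]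
      exact ha
    exact (Equiv.ofBijective g ⟨hginj, hgsurj⟩).symm
  have etot : T ≃ S × Fˣ :=
    (Equiv.sigmaFiberEquiv π).symm.trans
      ((Equiv.sigmaCongrRight efib).trans (Equiv.sigmaEquivProd S Fˣ))
  have hcards : Nat.card T = Nat.card S * Nat.card Fˣ := by
    rw [Nat.card_congr etot, Nat.card_prod]
  have hunits : Nat.card Fˣ = q - 1 := by
    rw [Nat.card_units, Nat.card_eq_fintype_card]
  have hmul : Nat.card S * (q - 1) = q ^ 2 - 1 := by
    rw [← hunits, ← hcards, hcardT]
  have hfactor : (q + 1) * (q - 1) = q ^ 2 - 1 := by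
    obtain ⟨k, hk⟩ := Nat.exists_eq_add_of_le hq2
    rw [hk, show 2 + k - 1 = k + 1 by omega]
    have h5 : (2 + k) ^ 2 = (2 + k + 1) * (k + 1) + 1 := by ring
    omega
  have := hmul.trans hfactor.symm
  exact Nat.eq_of_mul_eq_mul_right (by omega) this

/-- Degrees in the polarity graph. -/
lemma card_neighbor_self_ortho (P : Projectivization F (Fin 3 → F)) (h : ortho P P) :
    Nat.card ((polarityGraph F).neighborSet P) = Fintype.card F := by
  have hset : (polarityGraph F).neighborSet P
      = {L : Projectivization F (Fin 3 → F) | P.rep ⬝ᵥ L.rep = 0} \ {P} := by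
    ext L
    simp only [SimpleGraph.mem_neighborSet, polarityGraph, Set.mem_diff, Set.mem_setOf_eq,
      Set.mem_singleton_iff]
    exact ⟨fun ⟨h1, h2⟩ => ⟨h2, fun hLP => h1 hLP.symm⟩,
      fun ⟨h1, h2⟩ => ⟨fun hPL => h2 hPL.symm, h1⟩⟩
  rw [hset, Nat.card_coe_set_eq,
    Set.ncard_diff_singleton_of_mem (by exact h),
    ← Nat.card_coe_set_eq, card_perp P.rep P.rep_nonzero]
  omega

lemma card_neighbor_not_self_ortho (P : Projectivization F (Fin 3 → F)) (h : ¬ ortho P P) :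
    Nat.card ((polarityGraph F).neighborSet P) = Fintype.card F + 1 := by
  have hset : (polarityGraph F).neighborSet P
      = {L : Projectivization F (Fin 3 → F) | P.rep ⬝ᵥ L.rep = 0} := by
    ext L
    simp only [SimpleGraph.mem_neighborSet, polarityGraph, Set.mem_setOf_eq]
    exact ⟨fun ⟨_, h2⟩ => h2, fun h2 => ⟨fun hPL => h (hPL ▸ h2), h2⟩⟩
  rw [hset, card_perp P.rep P.rep_nonzero]

end Aux

/-- In `G̅_q`, no two vertices of degree `q` are adjacent; consequently every edge joins a
degree-`q` vertex to a degree-`(q+1)` vertex or two degree-`(q+1)` vertices. -/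
theorem polarityGraph_no_low_low_edges (q : ℕ) (hq : IsPrimePow q)
    (F : Type) [Field F] [Fintype F] (hF : Fintype.card F = q) :
    (∀ P L : Projectivization F (Fin 3 → F), (polarityGraph F).Adj P L →
      ¬(Nat.card ((polarityGraph F).neighborSet P) = q ∧
        Nat.card ((polarityGraph F).neighborSet L) = q)) ∧
    (∀ P L : Projectivization F (Fin 3 → F), (polarityGraph F).Adj P L →
      (Nat.card ((polarityGraph F).neighborSet P) = q ∧
         Nat.card ((polarityGraph F).neighborSet L) = q + 1) ∨
      (Nat.card ((polarityGraph F).neighborSet P) = q + 1 ∧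
         Nat.card ((polarityGraph F).neighborSet L) = q) ∨
      (Nat.card ((polarityGraph F).neighborSet P) = q + 1 ∧
         Nat.card ((polarityGraph F).neighborSet L) = q + 1)) := by
  classical
  subst hF
  have key : ∀ P L : Projectivization F (Fin 3 → F), (polarityGraph F).Adj P L →
      ortho P P → ortho L L → False := by
    intro P L hadj hPP hLL
    exact no_two_self_ortho P L hadj.1 hadj.2 hPP hLL
  constructor
  · intro P L hadj ⟨hP, hL⟩
    have hPP : ortho P P := by
      by_contra h
      have := card_neighbor_not_self_ortho P h
      omega
    have hLL : ortho L L := by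
      by_contra h
      have := card_neighbor_not_self_ortho L h
      omega
    exact key P L hadj hPP hLL
  · intro P L hadj
    by_cases hPP : ortho P P <;> by_cases hLL : ortho L L
    · exact absurd (key P L hadj hPP hLL) not_false
    · exact Or.inl ⟨card_neighbor_self_ortho P hPP, card_neighbor_not_self_ortho L hLL⟩
    · exact Or.inr (Or.inl ⟨card_neighbor_not_self_ortho P hPP,
        card_neighbor_self_ortho L hLL⟩)
    · exact Or.inr (Or.inr ⟨card_neighbor_not_self_ortho P hPP,
        card_neighbor_not_self_ortho L hLL⟩)
end

section
/- The graph G̅_q has exactly q(q+1)^2/2 edges, of which q(q+1) join a degree-q vertex to a degree-(q+1) vertex, and q(q^2−1)/2 join two degree-(q+1) vertices. -/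
open Projectivization

open Matrix Finset

variable {F : Type} [Field F] [Fintype F] [DecidableEq F]
set_option linter.unusedSectionVars false

lemma mk_unit_smul (P : Projectivization F (Fin 3 → F)) (c : Fˣ) :
    mk F ((c : F) • P.rep) (smul_ne_zero c.ne_zero P.rep_nonzero) = P := by
  conv_rhs => rw [← mk_rep P]
  rw [mk_eq_mk_iff]; exact ⟨c, rfl⟩

lemma ortho_mk {v w : Fin 3 → F} (hv : v ≠ 0) (hw : w ≠ 0) :
    (dotProduct (mk F v hv).rep (mk F w hw).rep = 0) ↔ v ⬝ᵥ w = 0 := by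
  obtain ⟨a, ha⟩ := exists_smul_eq_mk_rep F v hv
  obtain ⟨b, hb⟩ := exists_smul_eq_mk_rep F w hw
  rw [← ha, ← hb, Units.smul_def, Units.smul_def, smul_dotProduct, dotProduct_smul,
    smul_eq_mul, smul_eq_mul, mul_eq_zero, mul_eq_zero]
  simp [a.ne_zero, b.ne_zero]

/-- Counting: fibers of `mk` have size `q - 1`. -/
lemma card_lift (p : Projectivization F (Fin 3 → F) → Prop) :
    Nat.card {v : {u : Fin 3 → F // u ≠ 0} // p (mk F v.1 v.2)} =
      Nat.card {P : Projectivization F (Fin 3 → F) // p P} * (Fintype.card F - 1) := by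
  classical
  let f : (Σ _P : {P : Projectivization F (Fin 3 → F) // p P}, Fˣ) →
      {v : {u : Fin 3 → F // u ≠ 0} // p (mk F v.1 v.2)} :=
    fun x => ⟨⟨(x.2 : F) • x.1.1.rep, smul_ne_zero x.2.ne_zero x.1.1.rep_nonzero⟩, by
      simp only [mk_unit_smul]; exact x.1.2⟩
  have hbij : Function.Bijective f := by
    constructor
    · rintro ⟨⟨P, hP⟩, c⟩ ⟨⟨Q, hQ⟩, d⟩ h
      simp only [f, Subtype.mk.injEq] at h
      have hPQ : P = Q := by
        rw [← mk_unit_smul P c, ← mk_unit_smul Q d, mk_eq_mk_iff]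
        exact ⟨1, by simpa using h.symm⟩
      subst hPQ
      have hcd : (c : F) = d := smul_left_injective F P.rep_nonzero h
      simp [Sigma.ext_iff, Units.ext_iff, hcd]
    · rintro ⟨⟨v, hv⟩, hp⟩
      obtain ⟨a, ha⟩ := exists_smul_eq_mk_rep F v hv
      refine ⟨⟨⟨mk F v hv, hp⟩, a⁻¹⟩, ?_⟩
      simp only [f, Subtype.mk.injEq]
      ext
      simp only [← ha, Units.smul_def, smul_smul]
      simp
  rw [← Nat.card_congr (Equiv.ofBijective f hbij)]
  simp [Nat.card_eq_fintype_card, Fintype.card_sigma, Fintype.card_units]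

lemma card_dot_ker (w : Fin 3 → F) (hw : w ≠ 0) :
    Nat.card {v : Fin 3 → F // w ⬝ᵥ v = 0} = Fintype.card F ^ 2 := by
  classical
  let f : (Fin 3 → F) →ₗ[F] F :=
    { toFun := fun v => w ⬝ᵥ v
      map_add' := fun a b => by simp [dotProduct_add]
      map_smul' := fun c a => by simp [dotProduct_smul] }
  have hsurj : Function.Surjective f := by
    obtain ⟨i, hi⟩ := Function.ne_iff.mp hw
    have hi' : w i ≠ 0 := by simpa using hi
    intro a
    refine ⟨Pi.single i (a * (w i)⁻¹), ?_⟩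
    simp only [f, LinearMap.coe_mk, AddHom.coe_mk, dotProduct_single]
    rw [mul_comm a ((w i)⁻¹), ← mul_assoc, mul_inv_cancel₀ hi', one_mul]
  have hrange : LinearMap.range f = ⊤ := LinearMap.range_eq_top.mpr hsurj
  have hker : Module.finrank F (LinearMap.ker f) = 2 := by
    have h1 := LinearMap.finrank_range_add_finrank_ker f
    rw [hrange, finrank_top, Module.finrank_fin_fun, Module.finrank_self] at h1
    omega
  have : Nat.card {v : Fin 3 → F // w ⬝ᵥ v = 0} = Nat.card (LinearMap.ker f) := rfl
  rw [this, Nat.card_eq_fintype_card, Module.card_eq_pow_finrank (K := F), hker]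

lemma sum_sq_reindex (hF2 : ringChar F ≠ 2) (g : F → ℤ) :
    ∑ t : F, g (t ^ 2) = ∑ a : F, (quadraticChar F a + 1) * g a := by
  rw [← Finset.sum_fiberwise_of_maps_to (g := fun t : F => t ^ 2) (fun x _ => mem_univ (x ^ 2))
    (fun t => g (t ^ 2))]
  refine Finset.sum_congr rfl fun a _ => ?_
  have : ∀ t ∈ univ.filter (fun t : F => t ^ 2 = a), g (t ^ 2) = g a := by
    intro t ht; rw [(mem_filter.mp ht).2]
  rw [Finset.sum_congr rfl this, Finset.sum_const, nsmul_eq_mul]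
  congr 1
  have := quadraticChar_card_sqrts hF2 a
  rw [show ({x : F | x ^ 2 = a}.toFinset) = univ.filter (fun t : F => t ^ 2 = a) by
    ext x; simp] at this
  exact_mod_cast this

lemma Jsum (hF2 : ringChar F ≠ 2) : ∑ a : F, quadraticChar F (a * (a + 1)) = -1 := by
  have h1 : ∑ a : F, quadraticChar F (a * (a + 1)) =
      ∑ a ∈ univ.erase 0, quadraticChar F (a * (a + 1)) := by
    rw [Finset.sum_erase]
    simp
  have h2 : ∑ a ∈ univ.erase (0 : F), quadraticChar F (a * (a + 1)) =
      ∑ a ∈ univ.erase (0 : F), quadraticChar F (1 + a⁻¹) := by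
    refine Finset.sum_congr rfl fun a ha => ?_
    have ha0 : a ≠ 0 := (Finset.mem_erase.mp ha).1
    have : a * (a + 1) = a ^ 2 * (1 + a⁻¹) := by field_simp
    rw [this, _root_.map_mul, quadraticChar_sq_one' ha0, one_mul]
  have h3 : ∑ a ∈ univ.erase (0 : F), quadraticChar F (1 + a⁻¹) =
      ∑ b ∈ univ.erase (1 : F), quadraticChar F b := by
    refine Finset.sum_nbij' (fun a => 1 + a⁻¹) (fun b => (b - 1)⁻¹) ?_ ?_ ?_ ?_ ?_
    · intro a ha
      have ha0 : a ≠ 0 := (Finset.mem_erase.mp ha).1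
      refine Finset.mem_erase.mpr ⟨?_, mem_univ _⟩
      intro h
      have : a⁻¹ = 0 := by linear_combination h
      exact ha0 (inv_eq_zero.mp this)
    · intro b hb
      have hb1 : b ≠ 1 := (Finset.mem_erase.mp hb).1
      refine Finset.mem_erase.mpr ⟨inv_ne_zero (sub_ne_zero.mpr hb1), mem_univ _⟩
    · intro a _
      simp
    · intro b _
      simp
    · intro a _; rfl
  have h4 : quadraticChar F 1 + ∑ b ∈ univ.erase (1 : F), quadraticChar F b =
      ∑ b : F, quadraticChar F b :=
    Finset.add_sum_erase univ (fun b => quadraticChar F b) (mem_univ (1 : F))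
  rw [quadraticChar_sum_zero hF2, _root_.map_one] at h4
  rw [h1, h2, h3]; omega

lemma Csum (hF2 : ringChar F ≠ 2) : ∑ t : F, quadraticChar F (t ^ 2 + 1) = -1 := by
  rw [sum_sq_reindex hF2 (fun a => quadraticChar F (a + 1))]
  have : ∀ a : F, (quadraticChar F a + 1) * quadraticChar F (a + 1) =
      quadraticChar F (a * (a + 1)) + quadraticChar F (a + 1) := by
    intro a; rw [_root_.map_mul]; ring
  rw [Finset.sum_congr rfl fun a _ => this a, Finset.sum_add_distrib, Jsum hF2]
  have : ∑ a : F, quadraticChar F (a + 1) = ∑ b : F, quadraticChar F b :=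
    Fintype.sum_equiv (Equiv.addRight 1) _ _ (fun a => rfl)
  rw [this, quadraticChar_sum_zero hF2]
  ring

lemma Tzsum (hF2 : ringChar F ≠ 2) {z : F} (hz : z ≠ 0) :
    ∑ y : F, quadraticChar F (y ^ 2 + z ^ 2) = -1 := by
  have h1 : ∑ y : F, quadraticChar F (y ^ 2 + z ^ 2) =
      ∑ t : F, quadraticChar F ((z * t) ^ 2 + z ^ 2) :=
    (Fintype.sum_equiv (Equiv.mulLeft₀ z hz) _ _ (fun t => rfl)).symm
  have h2 : ∀ t : F, ((z * t) ^ 2 + z ^ 2) = z ^ 2 * (t ^ 2 + 1) := by intro t; ring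
  rw [h1]
  simp_rw [h2, _root_.map_mul, quadraticChar_sq_one' hz]
  simp only [one_mul]
  exact Csum hF2

lemma Tsum (hF2 : ringChar F ≠ 2) :
    ∑ z : F, ∑ y : F, quadraticChar F (y ^ 2 + z ^ 2) = 0 := by
  have h0 : ∑ y : F, quadraticChar F (y ^ 2 + (0 : F) ^ 2) = Fintype.card F - 1 := by
    have : ∀ y : F, quadraticChar F (y ^ 2 + (0 : F) ^ 2) = quadraticChar F (y ^ 2) := by
      intro y; ring_nf
    simp_rw [this]
    rw [sum_sq_reindex hF2 (fun a => quadraticChar F a)]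
    have : ∀ a : F, (quadraticChar F a + 1) * quadraticChar F a =
        quadraticChar F (a * a) + quadraticChar F a := by
      intro a; rw [_root_.map_mul]; ring
    rw [Finset.sum_congr rfl fun a _ => this a, Finset.sum_add_distrib,
      quadraticChar_sum_zero hF2, add_zero]
    have : ∀ a : F, quadraticChar F (a * a) = if a = 0 then 0 else 1 := by
      intro a
      by_cases h : a = 0
      · simp [h]
      · rw [← sq, quadraticChar_sq_one' h, if_neg h]
    rw [Finset.sum_congr rfl fun a _ => this a, Finset.sum_ite, Finset.sum_const,
      Finset.sum_const]
    simp only [Finset.filter_eq', Finset.filter_ne', Finset.card_erase_of_mem (mem_univ _),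
      Finset.card_univ, smul_eq_mul, mul_zero, mul_one, zero_add, nsmul_eq_mul]
    push_cast [Nat.one_le_iff_ne_zero.mpr (Fintype.card_ne_zero (α := F))]
    ring
  have hsplit : ∑ y : F, quadraticChar F (y ^ 2 + (0 : F) ^ 2) +
      ∑ z ∈ univ.erase (0 : F), ∑ y : F, quadraticChar F (y ^ 2 + z ^ 2) =
      ∑ z : F, ∑ y : F, quadraticChar F (y ^ 2 + z ^ 2) :=
    Finset.add_sum_erase univ (fun z => ∑ y : F, quadraticChar F (y ^ 2 + z ^ 2))
      (mem_univ (0 : F))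
  rw [← hsplit, h0]
  have : ∀ z ∈ univ.erase (0 : F), ∑ y : F, quadraticChar F (y ^ 2 + z ^ 2) = -1 := by
    intro z hz; exact Tzsum hF2 (Finset.mem_erase.mp hz).1
  rw [Finset.sum_congr rfl this, Finset.sum_const, Finset.card_erase_of_mem (mem_univ _)]
  simp only [Finset.card_univ, nsmul_eq_mul]
  have h2 : (1 : ℕ) ≤ Fintype.card F := Fintype.card_pos
  push_cast [h2]
  ring

lemma dot3 (v : Fin 3 → F) : v ⬝ᵥ v = v 0 * v 0 + v 1 * v 1 + v 2 * v 2 := by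
  simp [dotProduct, Fin.sum_univ_three]

lemma card_isotropic_odd (hF2 : ringChar F ≠ 2) :
    Nat.card {v : Fin 3 → F // v ⬝ᵥ v = 0} = Fintype.card F ^ 2 := by
  classical
  let e : {v : Fin 3 → F // v ⬝ᵥ v = 0} ≃
      Σ yz : F × F, {x : F // x ^ 2 = -(yz.1 ^ 2 + yz.2 ^ 2)} :=
    { toFun := fun v => ⟨(v.1 1, v.1 2), ⟨v.1 0, by
        have := v.2; rw [dot3] at this; linear_combination this⟩⟩
      invFun := fun s => ⟨![s.2.1, s.1.1, s.1.2], by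
        rw [dot3]
        show (s.2.1 : F) * s.2.1 + s.1.1 * s.1.1 + s.1.2 * s.1.2 = 0
        linear_combination s.2.2⟩
      left_inv := fun v => Subtype.ext (funext fun i => by fin_cases i <;> rfl)
      right_inv := fun s => rfl }
  rw [Nat.card_congr e, Nat.card_eq_fintype_card, Fintype.card_sigma]
  have key : ∀ a : F, (Fintype.card {x : F // x ^ 2 = a} : ℤ) = quadraticChar F a + 1 := by
    intro a
    rw [← quadraticChar_card_sqrts hF2 a]
    congr 1
    rw [Set.toFinset_card]
    exact Fintype.card_congr' rfl
  have hZ : ((∑ yz : F × F, Fintype.card {x : F // x ^ 2 = -(yz.1 ^ 2 + yz.2 ^ 2)} : ℕ) : ℤ)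
      = Fintype.card F ^ 2 := by
    push_cast
    rw [Finset.sum_congr rfl fun yz _ => key (-(yz.1 ^ 2 + yz.2 ^ 2))]
    rw [Finset.sum_add_distrib]
    have h1 : ∑ _yz : F × F, (1 : ℤ) = Fintype.card F ^ 2 := by
      simp [Finset.card_univ, sq]
    have h2 : ∑ yz : F × F, quadraticChar F (-(yz.1 ^ 2 + yz.2 ^ 2)) = 0 := by
      have : ∀ yz : F × F, quadraticChar F (-(yz.1 ^ 2 + yz.2 ^ 2)) =
          quadraticChar F (-1) * quadraticChar F (yz.1 ^ 2 + yz.2 ^ 2) := by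
        intro yz
        rw [← _root_.map_mul]
        congr 1; ring
      rw [Finset.sum_congr rfl fun yz _ => this yz, ← Finset.mul_sum]
      rw [Fintype.sum_prod_type, Finset.sum_comm, Tsum hF2, mul_zero]
    rw [h1, h2, zero_add]
  exact_mod_cast hZ

lemma card_isotropic :
    Nat.card {v : Fin 3 → F // v ⬝ᵥ v = 0} = Fintype.card F ^ 2 := by
  by_cases hF2 : ringChar F = 2
  · have h2' : (2 : F) = 0 := by
      have : ((ringChar F : ℕ) : F) = 0 := CharP.cast_eq_zero F (ringChar F)
      rw [hF2] at this
      exact_mod_cast this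
    have hpred : ∀ v : Fin 3 → F, (v ⬝ᵥ v = 0) ↔ (![1,1,1] : Fin 3 → F) ⬝ᵥ v = 0 := by
      intro v
      have hdd : v ⬝ᵥ v = (v 0 + v 1 + v 2) ^ 2 := by
        rw [dot3]
        linear_combination (-(v 0 * v 1) - v 0 * v 2 - v 1 * v 2) * h2'
      have hl : (![1,1,1] : Fin 3 → F) ⬝ᵥ v = v 0 + v 1 + v 2 := by
        simp [dotProduct, Fin.sum_univ_three]
      rw [hdd, hl, pow_eq_zero_iff (two_ne_zero)]
    rw [Nat.card_congr (Equiv.subtypeEquivRight hpred)]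
    exact card_dot_ker ![1,1,1] (by
      intro h
      have := congrFun h 0
      simp at this)
  · exact card_isotropic_odd hF2

lemma ortho_rep_mk (P : Projectivization F (Fin 3 → F)) {v : Fin 3 → F} (hv : v ≠ 0) :
    (P.rep ⬝ᵥ (mk F v hv).rep = 0) ↔ P.rep ⬝ᵥ v = 0 := by
  conv_lhs => rw [show P = mk F P.rep P.rep_nonzero from (mk_rep P).symm]
  exact ortho_mk P.rep_nonzero hv

lemma card_nonzero_pred (Pred : (Fin 3 → F) → Prop) (h0 : Pred 0) :
    Nat.card {v : {u : Fin 3 → F // u ≠ 0} // Pred v.1} =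
      Nat.card {v : Fin 3 → F // Pred v} - 1 := by
  classical
  have e : {v : {u : Fin 3 → F // u ≠ 0} // Pred v.1} ≃ {v : Fin 3 → F // Pred v ∧ v ≠ 0} :=
    { toFun := fun x => ⟨x.1.1, x.2, x.1.2⟩
      invFun := fun x => ⟨⟨x.1, x.2.2⟩, x.2.1⟩
      left_inv := fun _ => rfl
      right_inv := fun _ => rfl }
  rw [Nat.card_congr e, Nat.card_eq_fintype_card, Nat.card_eq_fintype_card,
    Fintype.card_subtype, Fintype.card_subtype]
  have hset : univ.filter (fun v : Fin 3 → F => Pred v ∧ v ≠ 0) =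
      (univ.filter (fun v => Pred v)).erase 0 := by
    ext v; simp [Finset.mem_erase, and_comm]
  rw [hset, Finset.card_erase_of_mem (by simp [h0])]

lemma sq_sub_one_fact (q : ℕ) (hq : 1 ≤ q) : (q + 1) * (q - 1) = q ^ 2 - 1 := by
  have h1 : 1 ≤ q ^ 2 := Nat.one_le_pow _ _ hq
  zify [hq, h1]
  ring

lemma cube_sub_one_fact (q : ℕ) (hq : 1 ≤ q) : (q ^ 2 + q + 1) * (q - 1) = q ^ 3 - 1 := by
  have h1 : 1 ≤ q ^ 3 := Nat.one_le_pow _ _ hq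
  zify [hq, h1]
  ring

lemma card_line (P : Projectivization F (Fin 3 → F)) :
    Nat.card {L : Projectivization F (Fin 3 → F) // P.rep ⬝ᵥ L.rep = 0} =
      Fintype.card F + 1 := by
  classical
  have hlift := card_lift (fun L => P.rep ⬝ᵥ L.rep = 0)
  rw [Nat.card_congr (Equiv.subtypeEquivRight
    (fun v : {u : Fin 3 → F // u ≠ 0} => ortho_rep_mk P v.2))] at hlift
  rw [card_nonzero_pred (fun u => P.rep ⬝ᵥ u = 0) (by simp), card_dot_ker P.rep P.rep_nonzero] at hlift
  have hq2 : 2 ≤ Fintype.card F := Fintype.one_lt_card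
  apply Nat.eq_of_mul_eq_mul_right (show 0 < Fintype.card F - 1 by omega)
  rw [← hlift, sq_sub_one_fact _ (by omega)]

lemma card_proj_total :
    Nat.card (Projectivization F (Fin 3 → F)) =
      Fintype.card F ^ 2 + Fintype.card F + 1 := by
  classical
  have hlift := card_lift (F := F) (fun _ => True)
  rw [Nat.card_congr (Equiv.subtypeUnivEquiv (fun _ => trivial)),
    Nat.card_congr (Equiv.subtypeUnivEquiv (fun _ => trivial))] at hlift
  have hcube : Nat.card {u : Fin 3 → F // u ≠ 0} = Fintype.card F ^ 3 - 1 := by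
    rw [Nat.card_eq_fintype_card, Fintype.card_subtype_compl]
    simp [Fintype.card_fun]
  rw [hcube] at hlift
  have hq2 : 2 ≤ Fintype.card F := Fintype.one_lt_card
  apply Nat.eq_of_mul_eq_mul_right (show 0 < Fintype.card F - 1 by omega)
  rw [← hlift, cube_sub_one_fact _ (by omega)]

lemma card_abs :
    Nat.card {P : Projectivization F (Fin 3 → F) // P.rep ⬝ᵥ P.rep = 0} =
      Fintype.card F + 1 := by
  classical
  have hlift := card_lift (F := F) (fun P => P.rep ⬝ᵥ P.rep = 0)
  rw [Nat.card_congr (Equiv.subtypeEquivRight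
    (fun v : {u : Fin 3 → F // u ≠ 0} => ortho_mk v.2 v.2))] at hlift
  rw [card_nonzero_pred (fun u => u ⬝ᵥ u = 0) (by simp), card_isotropic] at hlift
  have hq2 : 2 ≤ Fintype.card F := Fintype.one_lt_card
  apply Nat.eq_of_mul_eq_mul_right (show 0 < Fintype.card F - 1 by omega)
  rw [← hlift, sq_sub_one_fact _ (by omega)]

lemma abs_not_adjacent {P L : Projectivization F (Fin 3 → F)} (hP : P.rep ⬝ᵥ P.rep = 0)
    (hL : L.rep ⬝ᵥ L.rep = 0) (hPL : P.rep ⬝ᵥ L.rep = 0) : P = L := by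
  classical
  by_contra hne
  have hp0 : P.rep ≠ 0 := P.rep_nonzero
  have hl0 : L.rep ≠ 0 := L.rep_nonzero
  have hind : LinearIndependent F ![P.rep, L.rep] := by
    rw [LinearIndependent.pair_iff]
    intro s t hst
    by_cases ht : t = 0
    · subst ht
      rw [zero_smul, add_zero] at hst
      exact ⟨(smul_eq_zero.mp hst).resolve_right hp0, rfl⟩
    · exfalso
      apply hne
      have h1 : t • L.rep = (-s) • P.rep := by
        linear_combination (norm := module) hst
      have hrep : L.rep = (-s / t) • P.rep := by
        rw [div_eq_mul_inv, mul_comm, mul_smul, ← h1, smul_smul, inv_mul_cancel₀ ht, one_smul]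
      have hst0 : -s / t ≠ 0 := by
        intro h
        rw [h, zero_smul] at hrep
        exact hl0 hrep
      have : mk F L.rep hl0 = mk F P.rep hp0 := by
        rw [mk_eq_mk_iff]
        exact ⟨Units.mk0 (-s / t) hst0, hrep.symm⟩
      rw [mk_rep, mk_rep] at this
      exact this.symm
  set B : LinearMap.BilinForm F (Fin 3 → F) :=
    LinearMap.mk₂ F (fun v w => v ⬝ᵥ w)
      (fun a b w => add_dotProduct a b w)
      (fun c a w => smul_dotProduct c a w)
      (fun v a b => dotProduct_add v a b)
      (fun c v a => dotProduct_smul c v a) with hB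
  have hBapp : ∀ v w : Fin 3 → F, B v w = v ⬝ᵥ w := fun _ _ => rfl
  have hrefl : B.IsRefl := by
    intro x y h
    rw [hBapp] at h ⊢
    rwa [dotProduct_comm]
  have hnd : B.Nondegenerate := by
    constructor <;> intro v hv <;> funext i
    · have := hv (Pi.single i 1)
      rw [hBapp, dotProduct_single] at this
      simpa using this
    · have := hv (Pi.single i 1)
      rw [hBapp, single_dotProduct] at this
      simpa using this
  set W := Submodule.span F {P.rep, L.rep} with hW
  have hWle : W ≤ B.orthogonal W := by
    rw [hW, Submodule.span_le]
    rintro x hx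
    rw [SetLike.mem_coe, LinearMap.BilinForm.mem_orthogonal_iff]
    intro n hn
    induction hn using Submodule.span_induction with
    | mem y hy =>
      rcases hy with hy | hy <;> rcases hx with hx | hx <;>
        subst hy <;> subst hx <;>
        simp only [LinearMap.BilinForm.IsOrtho, hBapp]
      · exact hP
      · exact hPL
      · rwa [dotProduct_comm]
      · exact hL
    | zero => simp [LinearMap.BilinForm.IsOrtho]
    | add y z _ _ h1 h2 =>
      rw [LinearMap.map_add₂, h1, h2, add_zero]
    | smul a y _ h1 =>
      rw [LinearMap.map_smul₂, h1, smul_zero]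
  have hW2 : Module.finrank F W = 2 := by
    have h := finrank_span_eq_card (R := F) hind
    rw [show Set.range ![P.rep, L.rep] = {P.rep, L.rep} by
      ext x; simp [Fin.exists_fin_two, eq_comm, or_comm]] at h
    rw [hW, h, Fintype.card_fin]
  have horth : Module.finrank F (B.orthogonal W) = 1 := by
    rw [LinearMap.BilinForm.finrank_orthogonal hnd, Module.finrank_fin_fun, hW2]
  have hmono := Submodule.finrank_mono hWle
  omega

lemma adj_iff (P L : Projectivization F (Fin 3 → F)) :
    (polarityGraph F).Adj P L ↔ P ≠ L ∧ P.rep ⬝ᵥ L.rep = 0 := Iff.rfl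

lemma degree_abs (P : Projectivization F (Fin 3 → F)) (hP : P.rep ⬝ᵥ P.rep = 0) :
    Nat.card ((polarityGraph F).neighborSet P) = Fintype.card F := by
  classical
  have e : ((polarityGraph F).neighborSet P) ≃
      {L : Projectivization F (Fin 3 → F) // (P.rep ⬝ᵥ L.rep = 0) ∧ L ≠ P} := by
    refine Equiv.subtypeEquivRight fun L => ?_
    rw [SimpleGraph.mem_neighborSet, adj_iff]
    constructor
    · rintro ⟨h1, h2⟩; exact ⟨h2, h1.symm⟩
    · rintro ⟨h1, h2⟩; exact ⟨h2.symm, h1⟩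
  rw [Nat.card_congr e, Nat.card_eq_fintype_card, Fintype.card_subtype]
  have hline := card_line P
  rw [Nat.card_eq_fintype_card, Fintype.card_subtype] at hline
  have hset : univ.filter (fun L : Projectivization F (Fin 3 → F) =>
      (P.rep ⬝ᵥ L.rep = 0) ∧ L ≠ P) =
      (univ.filter (fun L : Projectivization F (Fin 3 → F) => P.rep ⬝ᵥ L.rep = 0)).erase P := by
    ext L; simp [Finset.mem_erase, and_comm]
  rw [hset, Finset.card_erase_of_mem (by rw [Finset.mem_filter]; exact ⟨mem_univ P, hP⟩), hline]
  omega

lemma degree_nonabs (P : Projectivization F (Fin 3 → F)) (hP : ¬ P.rep ⬝ᵥ P.rep = 0) :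
    Nat.card ((polarityGraph F).neighborSet P) = Fintype.card F + 1 := by
  classical
  have e : ((polarityGraph F).neighborSet P) ≃
      {L : Projectivization F (Fin 3 → F) // P.rep ⬝ᵥ L.rep = 0} := by
    refine Equiv.subtypeEquivRight fun L => ?_
    rw [SimpleGraph.mem_neighborSet, adj_iff]
    constructor
    · rintro ⟨_, h2⟩; exact h2
    · intro h
      refine ⟨fun hPL => hP ?_, h⟩
      rw [hPL] at h ⊢
      exact h
  rw [Nat.card_congr e, card_line P]

lemma degree_dichotomy (P : Projectivization F (Fin 3 → F)) :
    (Nat.card ((polarityGraph F).neighborSet P) = Fintype.card F ↔ P.rep ⬝ᵥ P.rep = 0) ∧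
    (Nat.card ((polarityGraph F).neighborSet P) = Fintype.card F + 1 ↔
      ¬ P.rep ⬝ᵥ P.rep = 0) := by
  by_cases hP : P.rep ⬝ᵥ P.rep = 0
  · rw [degree_abs P hP]
    exact ⟨iff_of_true rfl hP, iff_of_false (by omega) (not_not_intro hP)⟩
  · rw [degree_nonabs P hP]
    exact ⟨iff_of_false (by omega) hP, iff_of_true rfl hP⟩

lemma twice_card_edges :
    2 * Nat.card ((polarityGraph F).edgeSet) =
      Fintype.card F * (Fintype.card F + 1) ^ 2 := by
  classical
  letI : DecidableRel (polarityGraph F).Adj := Classical.decRel _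
  have hs := SimpleGraph.sum_degrees_eq_twice_card_edges (polarityGraph F)
  have hdeg : ∀ P : Projectivization F (Fin 3 → F),
      (polarityGraph F).degree P = Nat.card ((polarityGraph F).neighborSet P) := by
    intro P
    rw [← SimpleGraph.card_neighborSet_eq_degree, Nat.card_eq_fintype_card]
  rw [Finset.sum_congr rfl fun P _ => hdeg P] at hs
  rw [← Finset.sum_filter_add_sum_filter_not univ
    (fun P : Projectivization F (Fin 3 → F) => P.rep ⬝ᵥ P.rep = 0)] at hs
  have h1 : ∑ P ∈ univ.filter (fun P : Projectivization F (Fin 3 → F) =>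
      P.rep ⬝ᵥ P.rep = 0), Nat.card ((polarityGraph F).neighborSet P) =
      (Fintype.card F + 1) * Fintype.card F := by
    rw [Finset.sum_congr rfl fun P hP => degree_abs P (Finset.mem_filter.mp hP).2,
      Finset.sum_const, smul_eq_mul]
    congr 1
    have := card_abs (F := F)
    rw [Nat.card_eq_fintype_card, Fintype.card_subtype] at this
    exact this
  have h2 : ∑ P ∈ univ.filter (fun P : Projectivization F (Fin 3 → F) =>
      ¬ P.rep ⬝ᵥ P.rep = 0), Nat.card ((polarityGraph F).neighborSet P) =
      Fintype.card F ^ 2 * (Fintype.card F + 1) := by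
    rw [Finset.sum_congr rfl fun P hP => degree_nonabs P (Finset.mem_filter.mp hP).2,
      Finset.sum_const, smul_eq_mul]
    congr 1
    have htot := card_proj_total (F := F)
    rw [Nat.card_eq_fintype_card] at htot
    have habs := card_abs (F := F)
    rw [Nat.card_eq_fintype_card, Fintype.card_subtype] at habs
    have hsplit := Finset.card_filter_add_card_filter_not
      (s := (univ : Finset (Projectivization F (Fin 3 → F))))
      (p := fun P => P.rep ⬝ᵥ P.rep = 0)
    rw [Finset.card_univ] at hsplit
    omega
  rw [h1, h2] at hs
  have hE : (polarityGraph F).edgeFinset.card = Nat.card ((polarityGraph F).edgeSet) := by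
    rw [SimpleGraph.edgeFinset_card, Nat.card_eq_fintype_card]
  rw [hE] at hs
  rw [← hs]
  ring

lemma card_mixed :
    Nat.card {e : Sym2 (Projectivization F (Fin 3 → F)) //
      e ∈ (polarityGraph F).edgeSet ∧ ∃ u v, e = s(u, v) ∧
        Nat.card ((polarityGraph F).neighborSet u) = Fintype.card F ∧
        Nat.card ((polarityGraph F).neighborSet v) = Fintype.card F + 1} =
      Fintype.card F * (Fintype.card F + 1) := by
  classical
  let f : (Σ P : {P : Projectivization F (Fin 3 → F) // P.rep ⬝ᵥ P.rep = 0},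
      (polarityGraph F).neighborSet P.1) →
      {e : Sym2 (Projectivization F (Fin 3 → F)) //
        e ∈ (polarityGraph F).edgeSet ∧ ∃ u v, e = s(u, v) ∧
          Nat.card ((polarityGraph F).neighborSet u) = Fintype.card F ∧
          Nat.card ((polarityGraph F).neighborSet v) = Fintype.card F + 1} :=
    fun x => ⟨s(x.1.1, x.2.1), by
      have hadj : (polarityGraph F).Adj x.1.1 x.2.1 := x.2.2
      refine ⟨(SimpleGraph.mem_edgeSet _).mpr hadj, x.1.1, x.2.1, rfl,
        degree_abs _ x.1.2, degree_nonabs _ fun hA => ?_⟩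
      exact hadj.1 (abs_not_adjacent x.1.2 hA hadj.2)⟩
  have hbij : Function.Bijective f := by
    constructor
    · rintro ⟨⟨a, ha⟩, ⟨b, hb⟩⟩ ⟨⟨c, hc⟩, ⟨d, hd⟩⟩ h
      simp only [f, Subtype.mk.injEq] at h
      rcases Sym2.eq_iff.mp h with ⟨h1, h2⟩ | ⟨h1, h2⟩
      · subst h1; subst h2; rfl
      · exfalso
        have hadj : (polarityGraph F).Adj a b := hb
        have hb' : b.rep ⬝ᵥ b.rep = 0 := by rw [h2]; exact hc
        exact hadj.1 (abs_not_adjacent ha hb' hadj.2)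
    · rintro ⟨e, he, u, v, rfl, hu, hv⟩
      have hadj : (polarityGraph F).Adj u v := (SimpleGraph.mem_edgeSet _).mp he
      have hAu : u.rep ⬝ᵥ u.rep = 0 := ((degree_dichotomy u).1).mp hu
      exact ⟨⟨⟨u, hAu⟩, ⟨v, hadj⟩⟩, rfl⟩
  rw [← Nat.card_congr (Equiv.ofBijective f hbij), Nat.card_eq_fintype_card,
    Fintype.card_sigma]
  have hfib : ∀ P : {P : Projectivization F (Fin 3 → F) // P.rep ⬝ᵥ P.rep = 0},
      Fintype.card ((polarityGraph F).neighborSet P.1) = Fintype.card F := by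
    intro P
    rw [← Nat.card_eq_fintype_card]
    exact degree_abs _ P.2
  rw [Finset.sum_congr rfl fun P _ => hfib P, Finset.sum_const, smul_eq_mul,
    Finset.card_univ, ← Nat.card_eq_fintype_card, card_abs]
  ring


/-- `G̅_q` has exactly `q(q+1)^2/2` edges: `q(q+1)` of them join a degree-`q` vertex to a
degree-`(q+1)` vertex, and `q(q^2-1)/2` join two degree-`(q+1)` vertices. -/
theorem polarityGraph_edge_counts (q : ℕ) (hq : IsPrimePow q)
    (F : Type) [Field F] [Fintype F] (hF : Fintype.card F = q) :
    Nat.card ((polarityGraph F).edgeSet) = q * (q + 1) ^ 2 / 2 ∧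
    Nat.card {e : Sym2 (Projectivization F (Fin 3 → F)) //
      e ∈ (polarityGraph F).edgeSet ∧ ∃ u v, e = s(u, v) ∧
        Nat.card ((polarityGraph F).neighborSet u) = q ∧
        Nat.card ((polarityGraph F).neighborSet v) = q + 1} = q * (q + 1) ∧
    Nat.card {e : Sym2 (Projectivization F (Fin 3 → F)) //
      e ∈ (polarityGraph F).edgeSet ∧ ∃ u v, e = s(u, v) ∧
        Nat.card ((polarityGraph F).neighborSet u) = q + 1 ∧
        Nat.card ((polarityGraph F).neighborSet v) = q + 1} = q * (q ^ 2 - 1) / 2 := by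
  classical
  subst hF
  refine ⟨?_, card_mixed, ?_⟩
  · have h2E := twice_card_edges (F := F)
    generalize hm : Fintype.card F * (Fintype.card F + 1) ^ 2 = m at h2E ⊢
    omega
  · have key : ∀ a b : Projectivization F (Fin 3 → F),
        s(a, b) ∈ (polarityGraph F).edgeSet →
        ((∃ u v, s(a, b) = s(u, v) ∧
            Nat.card ((polarityGraph F).neighborSet u) = Fintype.card F + 1 ∧
            Nat.card ((polarityGraph F).neighborSet v) = Fintype.card F + 1) ↔
          ¬ (∃ u v, s(a, b) = s(u, v) ∧
            Nat.card ((polarityGraph F).neighborSet u) = Fintype.card F ∧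
            Nat.card ((polarityGraph F).neighborSet v) = Fintype.card F + 1)) := by
      intro a b he
      have hadj : (polarityGraph F).Adj a b := (SimpleGraph.mem_edgeSet _).mp he
      constructor
      · rintro ⟨u', v', huv', hu', hv'⟩ ⟨u, v, huv, hu, hv⟩
        have heq : s(u, v) = s(u', v') := by rw [← huv, ← huv']
        rcases Sym2.eq_iff.mp heq with ⟨h1, h2⟩ | ⟨h1, h2⟩
        · rw [h1] at hu; omega
        · rw [h1] at hu; omega
      · intro hnot
        have hna : ¬ a.rep ⬝ᵥ a.rep = 0 := fun hA => hnot ⟨a, b, rfl, degree_abs a hA,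
          degree_nonabs b fun hB => hadj.1 (abs_not_adjacent hA hB hadj.2)⟩
        have hnb : ¬ b.rep ⬝ᵥ b.rep = 0 := fun hB => hnot ⟨b, a, Sym2.eq_swap,
          degree_abs b hB,
          degree_nonabs a fun hA => hadj.1 (abs_not_adjacent hA hB hadj.2)⟩
        exact ⟨a, b, rfl, degree_nonabs a hna, degree_nonabs b hnb⟩
    have key' : ∀ e ∈ (polarityGraph F).edgeSet,
        ((∃ u v, e = s(u, v) ∧
            Nat.card ((polarityGraph F).neighborSet u) = Fintype.card F + 1 ∧
            Nat.card ((polarityGraph F).neighborSet v) = Fintype.card F + 1) ↔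
          ¬ (∃ u v, e = s(u, v) ∧
            Nat.card ((polarityGraph F).neighborSet u) = Fintype.card F ∧
            Nat.card ((polarityGraph F).neighborSet v) = Fintype.card F + 1)) := by
      intro e
      induction e using Sym2.ind with
      | _ a b => exact key a b
    have hsum : Nat.card {e : Sym2 (Projectivization F (Fin 3 → F)) //
          e ∈ (polarityGraph F).edgeSet ∧ ∃ u v, e = s(u, v) ∧
            Nat.card ((polarityGraph F).neighborSet u) = Fintype.card F ∧
            Nat.card ((polarityGraph F).neighborSet v) = Fintype.card F + 1} +
        Nat.card {e : Sym2 (Projectivization F (Fin 3 → F)) //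
          e ∈ (polarityGraph F).edgeSet ∧ ∃ u v, e = s(u, v) ∧
            Nat.card ((polarityGraph F).neighborSet u) = Fintype.card F + 1 ∧
            Nat.card ((polarityGraph F).neighborSet v) = Fintype.card F + 1} =
        Nat.card ((polarityGraph F).edgeSet) := by
      rw [Nat.card_eq_fintype_card, Nat.card_eq_fintype_card, Nat.card_eq_fintype_card,
        Fintype.card_subtype, Fintype.card_subtype]
      have hES : Fintype.card ((polarityGraph F).edgeSet) =
          (univ.filter (fun e : Sym2 (Projectivization F (Fin 3 → F)) =>
            e ∈ (polarityGraph F).edgeSet)).card := Fintype.card_subtype _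
      rw [hES]
      rw [← Finset.card_union_of_disjoint (by
        rw [Finset.disjoint_left]
        intro e h1 h2
        have h1' := (Finset.mem_filter.mp h1).2
        have h2' := (Finset.mem_filter.mp h2).2
        exact (key' e h1'.1).mp h2'.2 h1'.2)]
      congr 1
      ext e
      simp only [Finset.mem_union, Finset.mem_filter, Finset.mem_univ, true_and]
      constructor
      · rintro (⟨h, _⟩ | ⟨h, _⟩) <;> exact h
      · intro h
        by_cases hp2 : (∃ u v, e = s(u, v) ∧
            Nat.card ((polarityGraph F).neighborSet u) = Fintype.card F ∧
            Nat.card ((polarityGraph F).neighborSet v) = Fintype.card F + 1)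
        · exact Or.inl ⟨h, hp2⟩
        · exact Or.inr ⟨h, (key' e h).mpr hp2⟩
    have hT2 := card_mixed (F := F)
    have h2E := twice_card_edges (F := F)
    have hn2 : 2 ≤ Fintype.card F := Fintype.one_lt_card
    have harith : Fintype.card F * (Fintype.card F + 1) ^ 2 =
        2 * (Fintype.card F * (Fintype.card F + 1)) +
          Fintype.card F * (Fintype.card F ^ 2 - 1) := by
      have h1 : 1 ≤ Fintype.card F ^ 2 := Nat.one_le_pow _ _ (by omega)
      zify [h1]
      ring
    rw [hT2] at hsum
    rw [harith] at h2E
    generalize hk : Fintype.card F * (Fintype.card F ^ 2 - 1) = k at h2E ⊢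
    generalize hp : Fintype.card F * (Fintype.card F + 1) = p at h2E hsum
    omega
end

section
/- Under all-to-all unique shortest-path routing in G̅_q, each edge joining a degree-q vertex to a degree-(q+1) vertex carries exactly 2q shortest paths (in each direction), and each edge joining two degree-(q+1) vertices carries exactly 2q−1 shortest paths. -/
open Projectivization

/-- The load of the directed edge `(a, b)`: the number of ordered pairs `(u, v)` of distinct
vertices whose (unique) shortest path traverses the dart `(a, b)`. -/
noncomputable def edgeLoad (F : Type) [Field F]
    (a b : Projectivization F (Fin 3 → F)) : ℕ :=
  Nat.card {p : Projectivization F (Fin 3 → F) × Projectivization F (Fin 3 → F) //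
    p.1 ≠ p.2 ∧ ∃ w : (polarityGraph F).Walk p.1 p.2, w.IsPath ∧
      w.length = (polarityGraph F).dist p.1 p.2 ∧ ∃ d ∈ w.darts, d.toProd = (a, b)}

open Matrix

variable {F : Type} [Field F]

/-- Lagrange / Grassmann identity. -/
private lemma triple_cross (x v w : Fin 3 → F) :
    x ⨯₃ (v ⨯₃ w) = (x ⬝ᵥ w) • v - (x ⬝ᵥ v) • w := by
  funext i
  fin_cases i <;>
    simp [cross_apply, vec3_dotProduct, Pi.sub_apply, Pi.smul_apply, smul_eq_mul] <;> ring

private lemma perp_unique {v w x : Fin 3 → F} (hind : LinearIndependent F ![v, w])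
    (h1 : v ⬝ᵥ x = 0) (h2 : w ⬝ᵥ x = 0) (hx : x ≠ 0) :
    ∃ u : Fˣ, x = (u : F) • (v ⨯₃ w) := by
  have hc : v ⨯₃ w ≠ 0 := crossProduct_ne_zero_iff_linearIndependent.2 hind
  have h3 : x ⨯₃ (v ⨯₃ w) = 0 := by
    rw [triple_cross, dotProduct_comm x w, dotProduct_comm x v, h1, h2]
    simp
  have hdep : ¬ LinearIndependent F ![x, v ⨯₃ w] :=
    fun h => (crossProduct_ne_zero_iff_linearIndependent.2 h) h3
  rw [LinearIndependent.pair_iff' hx] at hdep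
  push_neg at hdep
  obtain ⟨a, ha⟩ := hdep
  have ha0 : a ≠ 0 := by rintro rfl; rw [zero_smul] at ha; exact hc ha.symm
  refine ⟨(Units.mk0 a ha0)⁻¹, ?_⟩
  rw [← ha]
  simp only [Units.val_inv_eq_inv_val, Units.val_mk0, smul_smul, inv_mul_cancel₀ ha0, one_smul]

private lemma ortho_comm {P L : Projectivization F (Fin 3 → F)} :
    ortho P L ↔ ortho L P := by
  unfold ortho; rw [dotProduct_comm]

private lemma rep_indep {a b : Projectivization F (Fin 3 → F)} (h : a ≠ b) :
    LinearIndependent F ![a.rep, b.rep] := by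
  rw [LinearIndependent.pair_iff' a.rep_nonzero]
  intro s hs
  apply h
  have hs0 : s ≠ 0 := fun h0 => b.rep_nonzero (by rw [← hs, h0, zero_smul])
  conv_lhs => rw [← a.mk_rep]
  conv_rhs => rw [← b.mk_rep]
  rw [Projectivization.mk_eq_mk_iff']
  exact ⟨s⁻¹, by rw [← hs, smul_smul, inv_mul_cancel₀ hs0, one_smul]⟩

private lemma ortho_mk_iff (a : Projectivization F (Fin 3 → F)) {c : Fin 3 → F} (hc : c ≠ 0) :
    ortho a (Projectivization.mk F c hc) ↔ a.rep ⬝ᵥ c = 0 := by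
  obtain ⟨u, hu⟩ := Projectivization.exists_smul_eq_mk_rep F c hc
  unfold ortho
  rw [← hu, Units.smul_def, dotProduct_smul, smul_eq_mul]
  exact ⟨fun h => by simpa using (mul_eq_zero.1 h).resolve_left (Units.ne_zero u),
    fun h => by rw [h, mul_zero]⟩

private lemma cross_rep_ne {a b : Projectivization F (Fin 3 → F)} (h : a ≠ b) :
    a.rep ⨯₃ b.rep ≠ 0 :=
  crossProduct_ne_zero_iff_linearIndependent.2 (rep_indep h)

/-- The common perpendicular of two distinct projective points. -/
noncomputable def cperp (a b : Projectivization F (Fin 3 → F)) (h : a ≠ b) :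
    Projectivization F (Fin 3 → F) :=
  Projectivization.mk F (a.rep ⨯₃ b.rep) (cross_rep_ne h)

private lemma commonPerp_eq {a b : Projectivization F (Fin 3 → F)} (h : a ≠ b) :
    {x : Projectivization F (Fin 3 → F) | ortho a x ∧ ortho b x} = {cperp a b h} := by
  ext x
  simp only [Set.mem_setOf_eq, Set.mem_singleton_iff]
  constructor
  · rintro ⟨h1, h2⟩
    obtain ⟨u, hu⟩ := perp_unique (rep_indep h) h1 h2 x.rep_nonzero
    rw [← x.mk_rep]
    unfold cperp
    rw [Projectivization.mk_eq_mk_iff]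
    exact ⟨u, hu.symm⟩
  · rintro rfl
    unfold cperp
    rw [ortho_mk_iff, ortho_mk_iff]
    exact ⟨dot_self_cross _ _, dot_cross_self _ _⟩

private lemma cperp_ortho {a b : Projectivization F (Fin 3 → F)} (h : a ≠ b) :
    ortho a (cperp a b h) ∧ ortho b (cperp a b h) := by
  have := commonPerp_eq h
  have : cperp a b h ∈ {x : Projectivization F (Fin 3 → F) | ortho a x ∧ ortho b x} := by
    rw [this]; rfl
  exact this

/-- The polar line of a point, as a set of projective points. -/
def pline (a : Projectivization F (Fin 3 → F)) : Set (Projectivization F (Fin 3 → F)) :=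
  {x | ortho a x}

private def dotLin (v : Fin 3 → F) : (Fin 3 → F) →ₗ[F] F where
  toFun x := v ⬝ᵥ x
  map_add' x y := dotProduct_add v x y
  map_smul' c x := by simp [dotProduct_smul, smul_eq_mul]

private lemma dotLin_apply (v x : Fin 3 → F) : dotLin v x = v ⬝ᵥ x := rfl

private lemma pline_ncard [Fintype F] (a : Projectivization F (Fin 3 → F)) :
    (pline a).ncard = Fintype.card F + 1 := by
  classical
  set q := Fintype.card F with hq
  have hq2 : 2 ≤ q := Fintype.one_lt_card
  set L := dotLin a.rep with hL
  -- the kernel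
  set W := LinearMap.ker L with hW
  have hrange : LinearMap.range L = ⊤ := by
    rw [LinearMap.range_eq_top]
    intro y
    have hex : ∃ x, L x ≠ 0 := by
      by_contra hcon
      push_neg at hcon
      apply a.rep_nonzero
      funext i
      have h5 := hcon (Pi.single i 1)
      rw [hL, dotLin_apply, dotProduct_single, mul_one] at h5
      exact h5
    obtain ⟨x, hx⟩ := hex
    exact ⟨(y * (L x)⁻¹) • x, by simp [mul_assoc, inv_mul_cancel₀ hx]⟩
  have hker : Module.finrank F W = 2 := by
    have h1 := LinearMap.finrank_range_add_finrank_ker L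
    rw [hrange, finrank_top, Module.finrank_self] at h1
    have h3 : Module.finrank F (Fin 3 → F) = 3 := by
      rw [Module.finrank_pi]; simp
    rw [h3] at h1
    rw [hW]
    omega
  letI : Fintype W := Fintype.ofFinite W
  have hcardW : Nat.card W = q ^ 2 := by
    rw [Nat.card_eq_fintype_card, Module.card_eq_pow_finrank (K := F) (V := W), hker]
  -- the bijection
  let f : {x : Projectivization F (Fin 3 → F) // ortho a x} × Fˣ → {w : W // w ≠ 0} :=
    fun p => ⟨⟨(p.2 : F) • p.1.1.rep, by
        have h6 : a.rep ⬝ᵥ p.1.1.rep = 0 := p.1.2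
        simp [hW, hL, LinearMap.mem_ker, dotLin_apply, dotProduct_smul, h6]⟩, by
      intro hcon
      have : (p.2 : F) • p.1.1.rep = 0 := congrArg Subtype.val hcon
      exact p.1.1.rep_nonzero (by simpa [Units.smul_def] using (smul_eq_zero.1 this).resolve_left (Units.ne_zero p.2))⟩
  have hfbij : Function.Bijective f := by
    constructor
    · rintro ⟨⟨x, hx⟩, u⟩ ⟨⟨y, hy⟩, v⟩ h
      have h' : (u : F) • x.rep = (v : F) • y.rep := by
        simpa [f, Subtype.ext_iff] using h
      have hxy : x = y := by
        conv_lhs => rw [← x.mk_rep]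
        conv_rhs => rw [← y.mk_rep]
        rw [Projectivization.mk_eq_mk_iff']
        refine ⟨u⁻¹ * v, ?_⟩
        calc ((u⁻¹ : Fˣ) * (v : F) : F) • y.rep = (u⁻¹ : Fˣ) • ((v : F) • y.rep) :=
              mul_smul _ _ _
          _ = (u⁻¹ : Fˣ) • ((u : F) • x.rep) := by rw [h']
          _ = x.rep := by rw [Units.smul_def, smul_smul]; simp
      subst hxy
      have huv : (u : F) = v := by
        by_contra hne
        have h0 : ((u : F) - v) • x.rep = 0 := by rw [sub_smul, h', sub_self]
        exact x.rep_nonzero ((smul_eq_zero.1 h0).resolve_left (sub_ne_zero.2 hne))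
      simp only [Prod.mk.injEq, Subtype.mk.injEq]
      exact ⟨trivial, Units.ext huv⟩
    · rintro ⟨⟨c, hcW⟩, hc0⟩
      have hc0' : c ≠ 0 := fun h => hc0 (Subtype.ext h)
      have hdot : a.rep ⬝ᵥ c = 0 := by
        have := hcW
        rw [hW, LinearMap.mem_ker, dotLin_apply] at this
        exact this
      obtain ⟨u, hu⟩ := Projectivization.exists_smul_eq_mk_rep F c hc0'
      refine ⟨⟨⟨Projectivization.mk F c hc0', (ortho_mk_iff a hc0').2 hdot⟩, u⁻¹⟩, ?_⟩
      apply Subtype.ext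
      apply Subtype.ext
      show (↑u⁻¹ : F) • (Projectivization.mk F c hc0').rep = c
      rw [← hu, Units.smul_def, smul_smul]
      simp
  have hcount : (pline a).ncard * (q - 1) = q ^ 2 - 1 := by
    have h1 := Nat.card_congr (Equiv.ofBijective f hfbij)
    rw [Nat.card_prod] at h1
    have h2 : Nat.card {x : Projectivization F (Fin 3 → F) // ortho a x} = (pline a).ncard := by
      rw [← Nat.card_coe_set_eq]; rfl
    have h3 : Nat.card Fˣ = q - 1 := by
      rw [Nat.card_units, Nat.card_eq_fintype_card]
    have h4 : Nat.card {w : W // w ≠ 0} = q ^ 2 - 1 := by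
      have e : Nat.card {w : W // w ≠ 0} = ({(0 : W)}ᶜ : Set W).ncard := by
        rw [← Nat.card_coe_set_eq]
        apply Nat.card_congr
        exact Equiv.subtypeEquivRight (fun w => by simp)
      rw [e, Set.compl_eq_univ_diff, Set.ncard_diff_singleton_of_mem (Set.mem_univ _),
        Set.ncard_univ, hcardW]
    rw [h2, h3, h4] at h1
    exact h1
  -- conclude
  obtain ⟨k, hk⟩ : ∃ k, q = k + 2 := ⟨q - 2, by omega⟩
  rw [hk] at hcount ⊢
  have hfac : (k + 2) ^ 2 - 1 = (k + 3) * (k + 1) := by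
    have h1 : (k + 2) ^ 2 = (k + 3) * (k + 1) + 1 := by ring
    rw [h1, Nat.add_sub_cancel]
  have hkk : k + 2 - 1 = k + 1 := rfl
  rw [hfac, hkk] at hcount
  have := Nat.eq_of_mul_eq_mul_right (show 0 < k + 1 by omega) hcount
  omega
private lemma adj_iff_s13 {a b : Projectivization F (Fin 3 → F)} :
    (polarityGraph F).Adj a b ↔ a ≠ b ∧ ortho a b := Iff.rfl

private lemma neighborSet_eq (a : Projectivization F (Fin 3 → F)) :
    (polarityGraph F).neighborSet a = pline a \ {a} := by
  ext x
  simp only [SimpleGraph.mem_neighborSet, adj_iff_s13, pline, Set.mem_diff, Set.mem_setOf_eq,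
    Set.mem_singleton_iff]
  constructor
  · rintro ⟨h1, h2⟩; exact ⟨h2, fun h => h1 h.symm⟩
  · rintro ⟨h1, h2⟩; exact ⟨fun h => h2 h.symm, h1⟩

open Classical in
private lemma deg_card [Fintype F] (a : Projectivization F (Fin 3 → F)) :
    Nat.card ((polarityGraph F).neighborSet a) =
      if ortho a a then Fintype.card F else Fintype.card F + 1 := by
  rw [Nat.card_coe_set_eq, neighborSet_eq]
  split_ifs with h
  · rw [Set.ncard_diff_singleton_of_mem (show a ∈ pline a from h), pline_ncard]; omega
  · rw [Set.diff_singleton_eq_self (show a ∉ pline a from h), pline_ncard]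

private lemma common_of_not_adj {u v : Projectivization F (Fin 3 → F)}
    (hne : u ≠ v) (hna : ¬ (polarityGraph F).Adj u v) :
    ∃ x, (polarityGraph F).Adj u x ∧ (polarityGraph F).Adj x v := by
  obtain ⟨h1, h2⟩ := cperp_ortho hne
  refine ⟨cperp u v hne, ⟨?_, h1⟩, ⟨?_, ortho_comm.1 h2⟩⟩
  · intro h
    exact hna ⟨hne, ortho_comm.1 (h ▸ h2)⟩
  · intro h
    exact hna ⟨hne, h ▸ h1⟩

private lemma dist_eq_two {u v : Projectivization F (Fin 3 → F)}
    (hne : u ≠ v) (hna : ¬ (polarityGraph F).Adj u v) :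
    (polarityGraph F).dist u v = 2 := by
  obtain ⟨x, h1, h2⟩ := common_of_not_adj hne hna
  let w : (polarityGraph F).Walk u v := .cons h1 (.cons h2 .nil)
  have hle : (polarityGraph F).dist u v ≤ 2 := by
    have := SimpleGraph.dist_le w
    simpa [w] using this
  have h0 : (polarityGraph F).dist u v ≠ 0 :=
    SimpleGraph.dist_ne_zero_iff_ne_and_reachable.2 ⟨hne, ⟨w⟩⟩
  have h1' : (polarityGraph F).dist u v ≠ 1 := fun h =>
    hna (SimpleGraph.dist_eq_one_iff_adj.1 h)
  omega

private lemma walk_len1 {α : Type*} {G : SimpleGraph α} {u v : α} (w : G.Walk u v)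
    (h : w.length = 1) : ∀ d ∈ w.darts, d.toProd = (u, v) := by
  cases w with
  | nil => simp at h
  | cons hadj w' =>
    cases w' with
    | nil =>
      intro d hd
      simp only [SimpleGraph.Walk.darts_cons, SimpleGraph.Walk.darts_nil,
        List.mem_cons, List.not_mem_nil, or_false] at hd
      subst hd; rfl
    | cons h2 w'' => simp [SimpleGraph.Walk.length_cons] at h

private lemma walk_len2 {α : Type*} {G : SimpleGraph α} {u v : α} (w : G.Walk u v)
    (h : w.length = 2) :
    ∃ x, G.Adj u x ∧ G.Adj x v ∧ ∀ d ∈ w.darts, d.toProd = (u, x) ∨ d.toProd = (x, v) := by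
  cases w with
  | nil => simp at h
  | cons h1 w' =>
    cases w' with
    | nil => simp at h
    | cons h2 w'' =>
      cases w'' with
      | nil =>
        refine ⟨_, h1, h2, ?_⟩
        intro d hd
        simp only [SimpleGraph.Walk.darts_cons, SimpleGraph.Walk.darts_nil,
          List.mem_cons, List.not_mem_nil, or_false] at hd
        rcases hd with rfl | rfl
        · exact Or.inl rfl
        · exact Or.inr rfl
      | cons h3 w''' => simp [SimpleGraph.Walk.length_cons] at h

/-- The set of ordered pairs routed through the dart `(a,b)`. -/
private def loadSet (a b : Projectivization F (Fin 3 → F)) :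
    Set (Projectivization F (Fin 3 → F) × Projectivization F (Fin 3 → F)) :=
  {p | p.1 ≠ p.2 ∧ ∃ w : (polarityGraph F).Walk p.1 p.2, w.IsPath ∧
      w.length = (polarityGraph F).dist p.1 p.2 ∧ ∃ d ∈ w.darts, d.toProd = (a, b)}

private lemma edgeLoad_eq_ncard (a b : Projectivization F (Fin 3 → F)) :
    edgeLoad F a b = (loadSet a b).ncard := by
  rw [← Nat.card_coe_set_eq]
  rfl

private def T2 (a b : Projectivization F (Fin 3 → F)) :
    Set (Projectivization F (Fin 3 → F)) := pline b \ (pline a ∪ {a, b})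

private lemma loadSet_eq {a b : Projectivization F (Fin 3 → F)}
    (hadj : (polarityGraph F).Adj a b) :
    loadSet a b = insert (a, b)
      ((fun v => (a, v)) '' T2 a b ∪ (fun u => (u, b)) '' T2 b a) := by
  have hab : a ≠ b := hadj.1
  have hoab : ortho a b := hadj.2
  have hmemab : (a, b) ∈ loadSet a b := by
    refine ⟨hab, .cons hadj .nil, ?_, ?_, ⟨⟨(a, b), hadj⟩, by simp, rfl⟩⟩
    · simp [SimpleGraph.Walk.isPath_def, hab]
    · simp [SimpleGraph.dist_eq_one_iff_adj.2 hadj]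
  have hmem2 : ∀ v' ∈ T2 a b, (a, v') ∈ loadSet a b := by
    intro v' hv'
    obtain ⟨hov, hnot⟩ := hv'
    simp only [Set.mem_union, Set.mem_insert_iff, Set.mem_singleton_iff] at hnot
    push_neg at hnot
    obtain ⟨hnoa, hna, hnb⟩ := hnot
    have hov' : ortho b v' := hov
    have hnoa' : ¬ ortho a v' := hnoa
    have hbv : (polarityGraph F).Adj b v' := ⟨fun h => hnb h.symm, hov'⟩
    have hnav : ¬ (polarityGraph F).Adj a v' := fun h => hnoa' h.2
    have hav : a ≠ v' := fun h => hna h.symm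
    refine ⟨hav, .cons hadj (.cons hbv .nil), ?_, ?_,
      ⟨⟨(a, b), hadj⟩, by simp, rfl⟩⟩
    · simp [SimpleGraph.Walk.isPath_def, hab, hav, hbv.1]
    · simp [dist_eq_two hav hnav]
  have hmem3 : ∀ u' ∈ T2 b a, (u', b) ∈ loadSet a b := by
    intro u' hu'
    obtain ⟨hou, hnot⟩ := hu'
    simp only [Set.mem_union, Set.mem_insert_iff, Set.mem_singleton_iff] at hnot
    push_neg at hnot
    obtain ⟨hnob, hnb, hna⟩ := hnot
    have hou' : ortho a u' := hou
    have hnob' : ¬ ortho b u' := hnob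
    have hua : (polarityGraph F).Adj u' a := ⟨hna, ortho_comm.1 hou'⟩
    have hnub : ¬ (polarityGraph F).Adj u' b := fun h => hnob' (ortho_comm.1 h.2)
    refine ⟨hnb, .cons hua (.cons hadj .nil), ?_, ?_,
      ⟨⟨(a, b), hadj⟩, by simp, rfl⟩⟩
    · simp [SimpleGraph.Walk.isPath_def, hab, hna, hnb]
    · simp [dist_eq_two hnb hnub]
  ext ⟨u, v⟩
  simp only [loadSet, Set.mem_setOf_eq, Set.mem_insert_iff, Set.mem_union, Set.mem_image,
    Prod.mk.injEq]
  constructor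
  · rintro ⟨hne, w, hpath, hlen, d, hd, hdp⟩
    by_cases hA : (polarityGraph F).Adj u v
    · rw [SimpleGraph.dist_eq_one_iff_adj.2 hA] at hlen
      have hth := walk_len1 w hlen d hd
      rw [hdp] at hth
      injection hth with h1 h2
      subst h1; subst h2
      exact Or.inl ⟨rfl, rfl⟩
    · rw [dist_eq_two hne hA] at hlen
      obtain ⟨x, h1, h2, hall⟩ := walk_len2 w hlen
      have hth := hall d hd
      rw [hdp] at hth
      rcases hth with h | h
      · injection h with hu hx
        subst hu; subst hx
        right; left
        refine ⟨v, ⟨h2.2, ?_⟩, rfl, rfl⟩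
        intro hmem
        simp only [Set.mem_union, Set.mem_insert_iff, Set.mem_singleton_iff] at hmem
        rcases hmem with hv | rfl | rfl
        · exact hA ⟨hne, hv⟩
        · exact hne rfl
        · exact h2.1 rfl
      · injection h with hx hv
        subst hx; subst hv
        right; right
        refine ⟨u, ⟨ortho_comm.1 h1.2, ?_⟩, rfl, rfl⟩
        intro hmem
        simp only [Set.mem_union, Set.mem_insert_iff, Set.mem_singleton_iff] at hmem
        rcases hmem with hu | rfl | rfl
        · exact hA ⟨hne, ortho_comm.1 hu⟩
        · exact hne rfl
        · exact h1.1 rfl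
  · rintro (⟨h1, h2⟩ | ⟨v', hv', h1, h2⟩ | ⟨u', hu', h1, h2⟩)
    · rw [h1, h2]; exact hmemab
    · rw [← h1, ← h2]; exact hmem2 v' hv'
    · rw [← h1, ← h2]; exact hmem3 u' hu'

open Classical in
private lemma T2_ncard [Fintype F] {u w : Projectivization F (Fin 3 → F)}
    (hadj : (polarityGraph F).Adj u w) (hww : ¬ ortho w w) :
    (T2 u w).ncard = if ortho u u then Fintype.card F else Fintype.card F - 1 := by
  have hne : u ≠ w := hadj.1
  have horth : ortho u w := hadj.2
  have key := Set.ncard_inter_add_ncard_diff_eq_ncard (pline w) (pline u ∪ ({u, w} : Set _))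
    (Set.toFinite _)
  rw [pline_ncard] at key
  have hq2 : 2 ≤ Fintype.card F := Fintype.one_lt_card
  split_ifs with huu
  · have hinter : pline w ∩ (pline u ∪ ({u, w} : Set _)) = {u} := by
      ext x
      simp only [Set.mem_inter_iff, Set.mem_union, Set.mem_insert_iff, Set.mem_singleton_iff]
      constructor
      · rintro ⟨hwx, (hux | rfl | rfl)⟩
        · have hx : x ∈ ({y | ortho u y ∧ ortho w y} : Set _) := ⟨hux, hwx⟩
          have hu : u ∈ ({y | ortho u y ∧ ortho w y} : Set _) := ⟨huu, ortho_comm.1 horth⟩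
          rw [commonPerp_eq hne] at hx hu
          rw [Set.mem_singleton_iff] at hx hu
          exact hx.trans hu.symm
        · rfl
        · exact absurd hwx hww
      · rintro rfl
        exact ⟨ortho_comm.1 horth, Or.inr (Or.inl rfl)⟩
    rw [hinter, Set.ncard_singleton] at key
    have : (T2 u w).ncard = (pline w \ (pline u ∪ ({u, w} : Set _))).ncard := rfl
    omega
  · have hcu : cperp u w hne ≠ u := by
      intro h
      have hx := (cperp_ortho hne).1
      rw [h] at hx
      exact huu hx
    have hinter : pline w ∩ (pline u ∪ ({u, w} : Set _)) = {cperp u w hne, u} := by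
      ext x
      simp only [Set.mem_inter_iff, Set.mem_union, Set.mem_insert_iff, Set.mem_singleton_iff]
      constructor
      · rintro ⟨hwx, (hux | rfl | rfl)⟩
        · have hx : x ∈ ({y | ortho u y ∧ ortho w y} : Set _) := ⟨hux, hwx⟩
          rw [commonPerp_eq hne] at hx
          exact Or.inl hx
        · exact Or.inr rfl
        · exact absurd hwx hww
      · rintro (rfl | rfl)
        · exact ⟨(cperp_ortho hne).2, Or.inl (cperp_ortho hne).1⟩
        · exact ⟨ortho_comm.1 horth, Or.inr (Or.inl rfl)⟩
    rw [hinter, Set.ncard_pair hcu] at key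
    have : (T2 u w).ncard = (pline w \ (pline u ∪ ({u, w} : Set _))).ncard := rfl
    omega

private lemma T2_ncard_self [Fintype F] {u w : Projectivization F (Fin 3 → F)}
    (hadj : (polarityGraph F).Adj u w) (hww : ortho w w) :
    (T2 u w).ncard = Fintype.card F - 1 := by
  have hne : u ≠ w := hadj.1
  have horth : ortho u w := hadj.2
  have key := Set.ncard_inter_add_ncard_diff_eq_ncard (pline w) (pline u ∪ ({u, w} : Set _))
    (Set.toFinite _)
  rw [pline_ncard] at key
  have hq2 : 2 ≤ Fintype.card F := Fintype.one_lt_card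
  have hinter : pline w ∩ (pline u ∪ ({u, w} : Set _)) = {w, u} := by
    ext x
    simp only [Set.mem_inter_iff, Set.mem_union, Set.mem_insert_iff, Set.mem_singleton_iff]
    constructor
    · rintro ⟨hwx, (hux | rfl | rfl)⟩
      · have hx : x ∈ ({y | ortho u y ∧ ortho w y} : Set _) := ⟨hux, hwx⟩
        have hw : w ∈ ({y | ortho u y ∧ ortho w y} : Set _) := ⟨horth, hww⟩
        rw [commonPerp_eq hne] at hx hw
        rw [Set.mem_singleton_iff] at hx hw
        exact Or.inl (hx.trans hw.symm)
      · exact Or.inr rfl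
      · exact Or.inl rfl
    · rintro (rfl | rfl)
      · exact ⟨hww, Or.inr (Or.inr rfl)⟩
      · exact ⟨ortho_comm.1 horth, Or.inr (Or.inl rfl)⟩
  rw [hinter, Set.ncard_pair (Ne.symm hne)] at key
  have : (T2 u w).ncard = (pline w \ (pline u ∪ ({u, w} : Set _))).ncard := rfl
  omega

private lemma load_formula [Fintype F] {a b : Projectivization F (Fin 3 → F)}
    (hadj : (polarityGraph F).Adj a b) :
    edgeLoad F a b = 1 + (T2 a b).ncard + (T2 b a).ncard := by
  rw [edgeLoad_eq_ncard, loadSet_eq hadj]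
  have hb2 : b ∉ T2 a b := by
    rintro ⟨-, hmem⟩
    exact hmem (Set.mem_union_right _ (by simp))
  have ha3 : a ∉ T2 b a := by
    rintro ⟨-, hmem⟩
    exact hmem (Set.mem_union_right _ (by simp))
  have hnotmem : (a, b) ∉
      ((fun v => (a, v)) '' T2 a b ∪ (fun u => (u, b)) '' T2 b a) := by
    intro hmem
    rcases (Set.mem_union _ _ _).1 hmem with ⟨v', hv', hveq⟩ | ⟨u', hu', hueq⟩
    · have : v' = b := (Prod.ext_iff.1 hveq).2
      exact hb2 (this ▸ hv')
    · have : u' = a := (Prod.ext_iff.1 hueq).1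
      exact ha3 (this ▸ hu')
  have hdisj : Disjoint ((fun v => (a, v)) '' T2 a b) ((fun u => (u, b)) '' T2 b a) := by
    rw [Set.disjoint_left]
    rintro p ⟨v', hv', hveq⟩ ⟨u', hu', hueq⟩
    have h1 : v' = b := by
      have := hveq.trans hueq.symm
      exact (Prod.ext_iff.1 this).2
    exact hb2 (h1 ▸ hv')
  rw [Set.ncard_insert_of_notMem hnotmem (Set.toFinite _),
    Set.ncard_union_eq hdisj (Set.toFinite _) (Set.toFinite _),
    Set.ncard_image_of_injective _ (fun x y h => (Prod.ext_iff.1 h).2),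
    Set.ncard_image_of_injective _ (fun x y h => (Prod.ext_iff.1 h).1)]
  omega

/-- Under all-to-all unique shortest-path routing in `G̅_q`, each edge joining a degree-`q`
vertex to a degree-`(q+1)` vertex carries exactly `2q` shortest paths in each direction, and
each edge joining two degree-`(q+1)` vertices carries exactly `2q - 1`. -/
theorem polarityGraph_edge_loads (q : ℕ) (hq : IsPrimePow q)
    (F : Type) [Field F] [Fintype F] (hF : Fintype.card F = q) :
    ∀ a b : Projectivization F (Fin 3 → F), (polarityGraph F).Adj a b →
      (((Nat.card ((polarityGraph F).neighborSet a) = q ∧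
         Nat.card ((polarityGraph F).neighborSet b) = q + 1) ∨
        (Nat.card ((polarityGraph F).neighborSet a) = q + 1 ∧
         Nat.card ((polarityGraph F).neighborSet b) = q)) →
        edgeLoad F a b = 2 * q) ∧
      ((Nat.card ((polarityGraph F).neighborSet a) = q + 1 ∧
        Nat.card ((polarityGraph F).neighborSet b) = q + 1) →
        edgeLoad F a b = 2 * q - 1) := by
  classical
  intro a b hadj
  have hq2 : 2 ≤ q := hF ▸ Fintype.one_lt_card
  have hadj' : (polarityGraph F).Adj b a := hadj.symm
  have hdeg : ∀ x : Projectivization F (Fin 3 → F),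
      Nat.card ((polarityGraph F).neighborSet x) = if ortho x x then q else q + 1 := by
    intro x
    rw [deg_card, hF]
  constructor
  · rintro (⟨ha, hb⟩ | ⟨ha, hb⟩)
    · have haa : ortho a a := by
        by_contra h
        rw [hdeg a, if_neg h] at ha
        omega
      have hbb : ¬ ortho b b := by
        intro h
        rw [hdeg b, if_pos h] at hb
        omega
      have e2 := T2_ncard hadj hbb
      rw [if_pos haa, hF] at e2
      have e3 := T2_ncard_self hadj' haa
      rw [hF] at e3
      rw [load_formula hadj, e2, e3]
      omega
    · have haa : ¬ ortho a a := by
        intro h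
        rw [hdeg a, if_pos h] at ha
        omega
      have hbb : ortho b b := by
        by_contra h
        rw [hdeg b, if_neg h] at hb
        omega
      have e2 := T2_ncard_self hadj hbb
      rw [hF] at e2
      have e3 := T2_ncard hadj' haa
      rw [if_pos hbb, hF] at e3
      rw [load_formula hadj, e2, e3]
      omega
  · rintro ⟨ha, hb⟩
    have haa : ¬ ortho a a := by
      intro h
      rw [hdeg a, if_pos h] at ha
      omega
    have hbb : ¬ ortho b b := by
      intro h
      rw [hdeg b, if_pos h] at hb
      omega
    have e2 := T2_ncard hadj hbb
    rw [if_neg haa, hF] at e2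
    have e3 := T2_ncard hadj' haa
    rw [if_neg hbb, hF] at e3
    rw [load_formula hadj, e2, e3]
    omega
end
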